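/- Let f : D_r → ℂ be holomorphic with a zero of even order k₀ ≥ 2 at 0, real on the real axis, nonnegative on (−r,r), and nonvanishing on D_r \ {0}. Then for all sufficiently small ρ > 0, the Brouwer degree of f on the full disk D_r at the value −ρ equals k₀, and the degree of f restricted to the upper half-disk D_r⁺ at −ρ equals k₀/2 ≥ 1. -/

import Mathlib

open Complex Filter Metric Set Topology

local notation "conj'" => starRingEnd ℂ

lemma aux_conj_hasDerivAt {f : ℂ → ℂ} {d w : ℂ}
    (hf : HasDerivAt f d (conj' w)) :
    HasDerivAt (fun z => conj' (f (conj' z))) (conj' d) w := by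
  rw [hasDerivAt_iff_tendsto_slope] at hf ⊢
  have h1 : Tendsto (fun z : ℂ => conj' z) (𝓝[≠] w) (𝓝[≠] (conj' w)) := by
    refine Tendsto.inf ?_ ?_
    · exact (Complex.continuous_conj.tendsto w)
    · exact tendsto_principal_principal.2 fun z hz h => hz (by simpa using congrArg conj' h)
  have h2 := (Complex.continuous_conj.tendsto d).comp (hf.comp h1)
  refine h2.congr' ?_
  filter_upwards [self_mem_nhdsWithin] with z hz
  simp only [Function.comp_apply, slope_def_field]
  rw [map_div₀]
  simp

lemma aux_conj_analyticAt {f : ℂ → ℂ} (hf : AnalyticAt ℂ f 0) :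
    AnalyticAt ℂ (fun z => conj' (f (conj' z))) 0 := by
  have := hf.eventually_analyticAt
  rw [Metric.eventually_nhds_iff_ball] at this
  obtain ⟨ε, hε, hball⟩ := this
  have hdiff : DifferentiableOn ℂ (fun z => conj' (f (conj' z))) (ball 0 ε) := by
    intro z hz
    have hcz : conj' z ∈ ball (0:ℂ) ε := by
      simpa [mem_ball, dist_eq_norm] using hz
    have hD : HasDerivAt f (deriv f (conj' z)) (conj' z) :=
      (hball _ hcz).differentiableAt.hasDerivAt
    exact (aux_conj_hasDerivAt hD).differentiableAt.differentiableWithinAt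
  exact (hdiff.analyticOnNhd isOpen_ball) 0 (by simpa [mem_ball] using hε)

lemma aux_card_roots (n : ℕ) (hn : n ≠ 0) (c : ℂ) (hc : c ≠ 0) :
    {w : ℂ | w ^ n = c}.Finite ∧ {w : ℂ | w ^ n = c}.ncard = n := by
  have hprim := Complex.isPrimitiveRoot_exp n hn
  have hset : {w : ℂ | w ^ n = c} = ↑(Polynomial.nthRoots n c).toFinset := by
    ext w
    simp [Polynomial.mem_nthRoots (Nat.pos_of_ne_zero hn)]
  constructor
  · rw [hset]; exact (Polynomial.nthRoots n c).toFinset.finite_toSet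
  · rw [hset, Set.ncard_coe_finset,
      Multiset.toFinset_card_of_nodup (hprim.nthRoots_nodup hc), hprim.card_nthRoots]
    rw [if_pos]
    exact ⟨Complex.exp (Complex.log c / n), by
      rw [← Complex.exp_nat_mul, mul_div_cancel₀ _ (Nat.cast_ne_zero.2 hn), Complex.exp_log hc]⟩

/-- Degree count for a holomorphic map near an even-order zero (the Brouwer
degree computation of the paper, expressed as a solution count): if `f` is
holomorphic near the closed disk `D_r`, has a zero of even order `k₀ ≥ 2` at
`0`, is real on the real axis, nonnegative on `(−r,r)`, and nonvanishing on
`D_r ∖ {0}`, then for all sufficiently small `ρ > 0`, the equation `f = −ρ`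
has exactly `k₀` solutions in `D_r` (the degree of `f` at `−ρ` on `D_r`) and
exactly `k₀/2 ≥ 1` solutions in the closed upper half-disk `D_r⁺`. -/
theorem degree_even_order_zero_half_disk
    (f : ℂ → ℂ) (r : ℝ) (hr : 0 < r) (k₀ : ℕ)
    (hf : AnalyticOnNhd ℂ f (Metric.closedBall 0 r))
    (hk₀even : Even k₀) (hk₀2 : 2 ≤ k₀)
    (hord : ∃ g : ℂ → ℂ, AnalyticAt ℂ g 0 ∧ g 0 ≠ 0 ∧
      ∀ᶠ z in nhds (0 : ℂ), f z = z ^ k₀ * g z)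
    (hreal : ∀ s : ℝ, |s| ≤ r → (f (s : ℂ)).im = 0)
    (hnonneg : ∀ s : ℝ, |s| < r → 0 ≤ (f (s : ℂ)).re)
    (hnv : ∀ z ∈ Metric.closedBall (0 : ℂ) r, z ≠ 0 → f z ≠ 0) :
    ∃ ρ₀ > (0 : ℝ), ∀ ρ : ℝ, 0 < ρ → ρ < ρ₀ →
      Nat.card {z : ℂ // z ∈ Metric.closedBall (0 : ℂ) r ∧ f z = (-ρ : ℝ)} = k₀ ∧
      Nat.card {z : ℂ // z ∈ Metric.closedBall (0 : ℂ) r ∧ 0 ≤ z.im ∧ f z = (-ρ : ℝ)} = k₀ / 2 ∧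
      1 ≤ k₀ / 2 := by
  obtain ⟨g, hg, hg0, hfg⟩ := hord
  have hk₀ : k₀ ≠ 0 := by omega
  -- `g 0` is a positive real
  have htR : Tendsto (fun s : ℝ => (s : ℂ)) (𝓝[>] (0:ℝ)) (𝓝 (0:ℂ)) := by
    have := Complex.continuous_ofReal.tendsto (0:ℝ)
    simpa using this.mono_left nhdsWithin_le_nhds
  have hmem : ∀ᶠ s : ℝ in 𝓝[>] (0:ℝ), (g s).im = 0 ∧ 0 ≤ (g s).re := by
    have hU : ∀ᶠ s : ℝ in 𝓝[>] (0:ℝ), f s = (s:ℂ) ^ k₀ * g s := htR.eventually hfg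
    have hsmall : ∀ᶠ s : ℝ in 𝓝[>] (0:ℝ), s < r :=
      eventually_nhdsWithin_of_eventually_nhds (Filter.Tendsto.eventually_lt_const hr tendsto_id)
    have hpos : ∀ᶠ s : ℝ in 𝓝[>] (0:ℝ), 0 < s := self_mem_nhdsWithin
    filter_upwards [hU, hsmall, hpos] with s hU hsr hs
    have habs : |s| < r := by rw [abs_of_pos hs]; exact hsr
    have him := hreal s habs.le
    have hre := hnonneg s habs
    have hsk : ((s:ℂ)) ^ k₀ = ((s ^ k₀ : ℝ) : ℂ) := by push_cast; ring
    have hskpos : (0:ℝ) < s ^ k₀ := pow_pos hs _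
    have hne : ((s ^ k₀ : ℝ) : ℂ) ≠ 0 := by
      exact_mod_cast hskpos.ne'
    have hgs : g s = f s / ((s ^ k₀ : ℝ) : ℂ) := by
      rw [hU, hsk]
      exact (mul_div_cancel_left₀ _ hne).symm
    rw [hgs]
    constructor
    · rw [Complex.div_ofReal_im, him, zero_div]
    · rw [Complex.div_ofReal_re]
      exact div_nonneg hre hskpos.le
  have hglim : Tendsto (fun s : ℝ => g s) (𝓝[>] (0:ℝ)) (𝓝 (g 0)) :=
    (hg.continuousAt.tendsto).comp htR
  have hgC : (g 0).im = 0 ∧ 0 ≤ (g 0).re := by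
    have hcl : IsClosed {w : ℂ | w.im = 0 ∧ 0 ≤ w.re} :=
      (isClosed_eq Complex.continuous_im continuous_const).inter
        (isClosed_le continuous_const Complex.continuous_re)
    exact hcl.mem_of_tendsto hglim hmem
  have hgre : 0 < (g 0).re := by
    rcases hgC.2.lt_or_eq with h | h
    · exact h
    · exact absurd (Complex.ext h.symm hgC.1) hg0
  have hgslit : g 0 ∈ Complex.slitPlane := Or.inl hgre
  -- the k₀-th root `h` of `g` and `φ z = z * h z`
  set h : ℂ → ℂ := fun z => Complex.exp (Complex.log (g z) / k₀) with hh_def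
  have hh : AnalyticAt ℂ h 0 := by
    have : AnalyticAt ℂ (fun z => Complex.log (g z) / k₀) 0 :=
      (hg.clog hgslit).div analyticAt_const (by exact_mod_cast hk₀)
    exact this.cexp
  have hh0 : h 0 ≠ 0 := Complex.exp_ne_zero _
  have hhk : ∀ᶠ z in 𝓝 (0:ℂ), h z ^ k₀ = g z := by
    filter_upwards [hg.continuousAt.eventually_ne hg0] with z hz
    rw [hh_def]
    rw [← Complex.exp_nat_mul, mul_div_cancel₀ _ (Nat.cast_ne_zero.2 hk₀), Complex.exp_log hz]
  set φ : ℂ → ℂ := fun z => z * h z with hφ_def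
  have hφ : AnalyticAt ℂ φ 0 := (analyticAt_id).mul hh
  have hφ0 : φ 0 = 0 := by simp [hφ_def]
  have hfφ : ∀ᶠ z in 𝓝 (0:ℂ), f z = φ z ^ k₀ := by
    filter_upwards [hfg, hhk] with z h1 h2
    rw [h1, ← h2, hφ_def, mul_pow]
  -- strict derivative of φ at 0
  have hd : HasDerivAt φ (h 0) 0 := by
    have h1 : HasDerivAt h (deriv h 0) 0 := hh.differentiableAt.hasDerivAt
    have h2 := (hasDerivAt_id' (0:ℂ)).mul h1
    simp only [one_mul, zero_mul, add_zero] at h2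
    exact h2
  have hsd : HasStrictDerivAt φ (h 0) 0 := by
    obtain ⟨p, hp⟩ := hφ
    have h1 := hp.hasStrictDerivAt
    have h2 := hp.hasDerivAt
    rwa [← h2.unique hd]
  set e := (hsd.hasStrictFDerivAt_equiv hh0).toOpenPartialHomeomorph φ with he_def
  have hecoe : (e : ℂ → ℂ) = φ := (hsd.hasStrictFDerivAt_equiv hh0).toOpenPartialHomeomorph_coe
  have h0s : (0:ℂ) ∈ e.source := (hsd.hasStrictFDerivAt_equiv hh0).mem_toOpenPartialHomeomorph_source
  have h0t : (0:ℂ) ∈ e.target := by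
    have := e.map_source h0s
    rwa [hecoe, hφ0] at this
  have hsymm0 : e.symm 0 = 0 := by
    have := e.left_inv h0s
    rwa [hecoe, hφ0] at this
  -- reflection symmetry near 0
  have hF : AnalyticAt ℂ (fun z => conj' (f (conj' z))) 0 :=
    aux_conj_analyticAt (hf 0 (Metric.mem_closedBall_self hr.le))
  have hfreq : ∃ᶠ z in 𝓝[≠] (0:ℂ), f z = conj' (f (conj' z)) := by
    have ht : Tendsto (fun s : ℝ => (s:ℂ)) (𝓝[≠] (0:ℝ)) (𝓝[≠] (0:ℂ)) := by
      refine Tendsto.inf ?_ ?_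
      · simpa using (Complex.continuous_ofReal.tendsto (0:ℝ))
      · refine tendsto_principal_principal.2 fun s hs h => hs ?_
        have : (s : ℂ) = 0 := h
        exact_mod_cast this
    refine ht.frequently (Filter.Eventually.frequently ?_)
    have habs : ∀ᶠ s : ℝ in 𝓝[≠] (0:ℝ), |s| ≤ r := by
      refine eventually_nhdsWithin_of_eventually_nhds ?_
      have := eventually_abs_sub_lt (0:ℝ) hr
      filter_upwards [this] with s hs
      simpa using hs.le
    filter_upwards [habs] with s hs
    rw [Complex.conj_ofReal, (Complex.conj_eq_iff_im).2 (hreal s hs)]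
  have hsym : ∀ᶠ z in 𝓝 (0:ℂ), f z = conj' (f (conj' z)) :=
    ((hf 0 (Metric.mem_closedBall_self hr.le)).frequently_eq_iff_eventually_eq hF).1 hfreq
  -- choose δ
  have hevδ : ∀ᶠ z in 𝓝 (0:ℂ),
      f z = φ z ^ k₀ ∧ f z = conj' (f (conj' z)) ∧ z ∈ e.source := by
    filter_upwards [hfφ, hsym, e.open_source.mem_nhds h0s] with z h1 h2 h3
    exact ⟨h1, h2, h3⟩
  rw [Metric.eventually_nhds_iff_ball] at hevδ
  obtain ⟨ε₁, hε₁, hball₁⟩ := hevδ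
  set δ : ℝ := min (ε₁ / 2) r with hδ_def
  have hδpos : 0 < δ := lt_min (by linarith) hr
  have hδr : δ ≤ r := min_le_right _ _
  have hδ : ∀ z ∈ ball (0:ℂ) δ,
      f z = φ z ^ k₀ ∧ f z = conj' (f (conj' z)) ∧ z ∈ e.source := by
    intro z hz
    apply hball₁
    have : δ ≤ ε₁ / 2 := min_le_left _ _
    exact mem_ball.2 (lt_of_lt_of_le (mem_ball.1 hz) (by linarith))
  -- choose τ
  have hevτ : ∀ᶠ w in 𝓝 (0:ℂ), w ∈ e.target ∧ e.symm w ∈ ball (0:ℂ) δ := by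
    have hc : ContinuousAt e.symm 0 := e.continuousAt_symm h0t
    have h1 : ∀ᶠ w in 𝓝 (0:ℂ), e.symm w ∈ ball (0:ℂ) δ := by
      have : ball (0:ℂ) δ ∈ 𝓝 (e.symm 0) := by
        rw [hsymm0]; exact ball_mem_nhds _ hδpos
      exact hc.eventually_mem this
    filter_upwards [e.open_target.mem_nhds h0t, h1] with w hw1 hw2
    exact ⟨hw1, hw2⟩
  rw [Metric.eventually_nhds_iff_ball] at hevτ
  obtain ⟨ε₂, hε₂, hball₂⟩ := hevτ
  set τ : ℝ := ε₂ / 2 with hτ_def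
  have hτpos : 0 < τ := by linarith
  have hτ : ∀ w : ℂ, ‖w‖ < τ → w ∈ e.target ∧ e.symm w ∈ ball (0:ℂ) δ := by
    intro w hw
    apply hball₂
    rw [mem_ball, dist_zero_right]
    linarith
  -- minimum of ‖f‖ on the annulus
  set K : Set ℂ := Metric.closedBall 0 r \ ball 0 δ with hK_def
  have hKcpt : IsCompact K := (isCompact_closedBall _ _).diff isOpen_ball
  have hKne : K.Nonempty := by
    refine ⟨(r:ℂ), ?_, ?_⟩
    · simp [Complex.norm_real, Real.norm_eq_abs, abs_of_pos hr]
    · simp only [mem_ball, dist_zero_right, not_lt, Complex.norm_real, Real.norm_eq_abs]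
      rw [abs_of_pos hr]; exact hδr
  have hfc : ContinuousOn (fun z => ‖f z‖) K := by
    refine (hf.continuousOn.mono ?_).norm
    exact fun z hz => hz.1
  obtain ⟨z₀, hz₀K, hz₀min⟩ := hKcpt.exists_isMinOn hKne hfc
  set ε : ℝ := ‖f z₀‖ with hε_def
  have hεpos : 0 < ε := by
    have hz₀ne : z₀ ≠ 0 := by
      intro h
      exact (notMem_of_mem_diff hz₀K) (by simp [h, hδpos])
    exact norm_pos_iff.2 (hnv z₀ hz₀K.1 hz₀ne)
  -- final ρ₀
  refine ⟨min ε (τ ^ k₀), lt_min hεpos (pow_pos hτpos _), ?_⟩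
  intro ρ hρ0 hρ
  have hρε : ρ < ε := lt_of_lt_of_le hρ (min_le_left _ _)
  have hρτ : ρ < τ ^ k₀ := lt_of_lt_of_le hρ (min_le_right _ _)
  have hcne : ((-ρ : ℝ) : ℂ) ≠ 0 := by
    simp only [ne_eq, Complex.ofReal_eq_zero]
    linarith
  set W : Set ℂ := {w : ℂ | w ^ k₀ = ((-ρ : ℝ) : ℂ)} with hW_def
  set S : Set ℂ := {z : ℂ | z ∈ Metric.closedBall (0:ℂ) r ∧ f z = ((-ρ : ℝ) : ℂ)} with hS_def
  obtain ⟨hWfin, hWcard⟩ := aux_card_roots k₀ hk₀ _ hcne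
  -- S lies in the small ball
  have hSsub : S ⊆ ball (0:ℂ) δ := by
    rintro z ⟨hz1, hz2⟩
    by_contra hz3
    have hzK : z ∈ K := ⟨hz1, hz3⟩
    have h5 : ‖f z₀‖ ≤ ‖f z‖ := hz₀min hzK
    rw [hz2, Complex.norm_real, Real.norm_eq_abs,
      abs_of_neg (by linarith : (-ρ:ℝ) < 0)] at h5
    linarith
  -- S is the image of W under e.symm
  have hWnorm : ∀ w ∈ W, ‖w‖ < τ := by
    intro w hw
    by_contra hcon
    push_neg at hcon
    have h1 : τ ^ k₀ ≤ ‖w‖ ^ k₀ := pow_le_pow_left₀ hτpos.le hcon _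
    have h2 : ‖w‖ ^ k₀ = ρ := by
      rw [← norm_pow, hw]
      simp only [Complex.norm_real, Real.norm_eq_abs]
      rw [abs_of_neg (by linarith : (-ρ:ℝ) < 0)]
      simp
    rw [h2] at h1
    linarith
  have hSeq : S = e.symm '' W := by
    ext z
    constructor
    · intro hz
      have hzb := hSsub hz
      obtain ⟨hq1, _, hq3⟩ := hδ z hzb
      refine ⟨φ z, ?_, ?_⟩
      · rw [hW_def, mem_setOf_eq, ← hq1]
        exact hz.2
      · have := e.left_inv hq3
        rwa [hecoe] at this
    · rintro ⟨w, hw, rfl⟩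
      obtain ⟨hw1, hw2⟩ := hτ w (hWnorm w hw)
      have hzb : e.symm w ∈ ball (0:ℂ) δ := hw2
      obtain ⟨hq1, _, _⟩ := hδ _ hzb
      constructor
      · exact mem_of_mem_of_subset hzb
          ((ball_subset_closedBall).trans (closedBall_subset_closedBall hδr))
      · rw [hq1]
        have her := e.right_inv hw1
        rw [hecoe] at her
        rw [her]
        exact hw
  have hinj : Set.InjOn e.symm W := by
    intro w1 hw1 w2 hw2 hww
    have h1 := (hτ w1 (hWnorm w1 hw1)).1
    have h2 := (hτ w2 (hWnorm w2 hw2)).1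
    exact e.symm.injOn (by simpa using h1) (by simpa using h2) hww
  have hSfin : S.Finite := by rw [hSeq]; exact hWfin.image _
  have hScard : S.ncard = k₀ := by
    rw [hSeq, Set.ncard_image_of_injOn hinj, hWcard]
  -- reflection on S
  have hconjS : ∀ z ∈ S, conj' z ∈ S ∧ f (conj' z) = conj' (f z) := by
    intro z hz
    have hzb := hSsub hz
    obtain ⟨_, hq2, _⟩ := hδ z hzb
    have hfc : f (conj' z) = conj' (f z) := by
      rw [hq2]; simp
    refine ⟨⟨?_, ?_⟩, hfc⟩
    · have : ‖conj' z‖ = ‖z‖ := by simp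
      rw [Metric.mem_closedBall, dist_zero_right, this]
      exact le_trans (le_of_lt (by simpa using hzb)) hδr
    · rw [hfc, hz.2]
      simp [Complex.conj_ofReal]
  have hnoreal : ∀ z ∈ S, z.im ≠ 0 := by
    intro z hz him
    have hzb := hSsub hz
    have hzre : |z.re| < r := by
      have h1 : |z.re| ≤ ‖z‖ := Complex.abs_re_le_norm z
      have h2 : ‖z‖ < δ := by simpa using hzb
      linarith [hδr]
    have hzeq : z = ((z.re : ℝ) : ℂ) := Complex.ext rfl (by simp [him])
    have := hnonneg z.re hzre
    rw [← hzeq, hz.2] at this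
    simp only [Complex.ofReal_re] at this
    linarith
  -- split S into upper and lower parts
  set Sp : Set ℂ := {z : ℂ | z ∈ Metric.closedBall (0:ℂ) r ∧ 0 ≤ z.im ∧ f z = ((-ρ : ℝ) : ℂ)}
    with hSp_def
  set Sm : Set ℂ := {z ∈ S | z.im < 0} with hSm_def
  have hSpS : Sp = {z ∈ S | 0 ≤ z.im} := by
    ext z; constructor
    · rintro ⟨h1, h2, h3⟩; exact ⟨⟨h1, h3⟩, h2⟩
    · rintro ⟨⟨h1, h3⟩, h2⟩; exact ⟨h1, h2, h3⟩
  have hunion : S = Sp ∪ Sm := by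
    rw [hSpS]
    ext z
    constructor
    · intro hz
      rcases le_or_gt 0 z.im with h | h
      · exact Or.inl ⟨hz, h⟩
      · exact Or.inr ⟨hz, h⟩
    · rintro (⟨hz, _⟩ | ⟨hz, _⟩) <;> exact hz
  have hdisj : Disjoint Sp Sm := by
    rw [hSpS]
    rw [Set.disjoint_left]
    rintro z ⟨_, h1⟩ ⟨_, h2⟩
    linarith
  have hSm_img : Sm = conj' '' Sp := by
    rw [hSpS]
    ext z
    constructor
    · rintro ⟨hz, him⟩
      refine ⟨conj' z, ⟨(hconjS z hz).1, ?_⟩, by simp⟩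
      simp only [Complex.conj_im]
      linarith
    · rintro ⟨w, ⟨hw, him⟩, rfl⟩
      refine ⟨(hconjS w hw).1, ?_⟩
      simp only [Complex.conj_im]
      have := hnoreal w hw
      cases' lt_or_eq_of_le him with h h
      · linarith
      · exact absurd h.symm this
  have hSpfin : Sp.Finite := hSfin.subset (by rw [hunion]; exact subset_union_left)
  have hSmfin : Sm.Finite := hSfin.subset (by rw [hunion]; exact subset_union_right)
  have hcard2 : S.ncard = Sp.ncard + Sm.ncard := by
    rw [hunion, Set.ncard_union_eq hdisj hSpfin hSmfin]
  have hSm_card : Sm.ncard = Sp.ncard := by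
    rw [hSm_img, Set.ncard_image_of_injective _ (starRingEnd ℂ).injective]
  have hSp_card : Sp.ncard = k₀ / 2 := by
    have h2 : k₀ % 2 = 0 := Nat.even_iff.1 hk₀even
    rw [hScard, hSm_card] at hcard2
    omega
  refine ⟨?_, ?_, by omega⟩
  · rw [← hScard]
    exact Nat.card_coe_set_eq S
  · rw [← hSp_card]
    exact Nat.card_coe_set_eq Sp
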